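/- Let R be a commutative noetherian ring, I, J, J' ideals of R, M a finitely generated R-module, and N an R-module. Then Γ_{I,J}(Γ_{I,J'}(M,N)) = Γ_{I,JJ'}(M,N) = Γ_{I,J∩J'}(M,N), where Γ_{I,J} applied to the submodule Γ_{I,J'}(M,N) of Hom_R(M,N) means its (I,J)-torsion submodule. -/

import Mathlib

open CategoryTheory

section GammaDefs

variable {R : Type} [CommRing R]

lemma gammaIJ_aux {M : Type} [AddCommGroup M] [Module R M] (I J : Ideal R) (x : M) (n : ℕ) :
    (∀ a ∈ I ^ n, ∃ j ∈ J, a • x = j • x) ↔ I ^ n ≤ Ideal.torsionOf R M x ⊔ J := by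
  constructor
  · intro h a ha
    obtain ⟨j, hj, hja⟩ := h a ha
    exact Submodule.mem_sup.2 ⟨a - j, by simp [Ideal.mem_torsionOf_iff, sub_smul, hja],
      j, hj, by ring⟩
  · intro h a ha
    obtain ⟨s, hs, j, hj, hsj⟩ := Submodule.mem_sup.1 (h ha)
    refine ⟨j, hj, ?_⟩
    rw [← hsj, add_smul, (Ideal.mem_torsionOf_iff _ _).1 hs, zero_add]

/-- The `(I,J)`-torsion submodule: elements `x` such that `I^n x ⊆ J x` for some `n > 0`. -/
def gammaIJ (I J : Ideal R) (M : Type) [AddCommGroup M] [Module R M] : Submodule R M where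
  carrier := {x | ∃ n : ℕ, 0 < n ∧ ∀ a ∈ I ^ n, ∃ j ∈ J, a • x = j • x}
  zero_mem' := ⟨1, one_pos, fun a _ => ⟨0, J.zero_mem, by simp⟩⟩
  add_mem' := by
    rintro x y ⟨n, hn, hx⟩ ⟨m, hm, hy⟩
    refine ⟨n + m, by omega, (gammaIJ_aux I J _ _).2 ?_⟩
    rw [pow_add]
    refine le_trans (Ideal.mul_mono ((gammaIJ_aux I J _ _).1 hx) ((gammaIJ_aux I J _ _).1 hy))
      (Ideal.mul_le.2 ?_)
    rintro a ha b hb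
    obtain ⟨s, hs, j, hj, rfl⟩ := Submodule.mem_sup.1 ha
    obtain ⟨t, ht, j', hj', rfl⟩ := Submodule.mem_sup.1 hb
    rw [Ideal.mem_torsionOf_iff] at hs ht
    refine Submodule.mem_sup.2 ⟨s * t, ?_, s * j' + j * t + j * j',
      J.add_mem (J.add_mem (J.mul_mem_left s hj') (J.mul_mem_right t hj)) (J.mul_mem_left j hj'),
      by ring⟩
    have h1 : (s * t) • x = 0 := by rw [mul_comm, mul_smul, hs, smul_zero]
    have h2 : (s * t) • y = 0 := by rw [mul_smul, ht, smul_zero]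
    rw [Ideal.mem_torsionOf_iff, smul_add, h1, h2, add_zero]
  smul_mem' := by
    rintro r x ⟨n, hn, hx⟩
    refine ⟨n, hn, fun a ha => ?_⟩
    obtain ⟨j, hj, hja⟩ := hx a ha
    exact ⟨j, hj, by rw [smul_comm, hja, smul_comm]⟩

/-- The `I`-torsion submodule: elements killed by a power of `I`. -/
def gammaI (I : Ideal R) (M : Type) [AddCommGroup M] [Module R M] : Submodule R M where
  carrier := {x | ∃ n : ℕ, 0 < n ∧ ∀ a ∈ I ^ n, a • x = 0}
  zero_mem' := ⟨1, one_pos, fun a _ => smul_zero a⟩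
  add_mem' := by
    rintro x y ⟨n, hn, hx⟩ ⟨m, hm, hy⟩
    refine ⟨n + m, by omega, fun a ha => ?_⟩
    rw [smul_add, hx a (Ideal.pow_le_pow_right (by omega) ha),
      hy a (Ideal.pow_le_pow_right (by omega) ha), add_zero]
  smul_mem' := by
    rintro r x ⟨n, hn, hx⟩
    exact ⟨n, hn, fun a ha => by rw [smul_comm, hx a ha, smul_zero]⟩

end GammaDefs




section Aux

variable {R : Type} [CommRing R]

lemma mem_gammaIJ_iff {M : Type} [AddCommGroup M] [Module R M] (I J : Ideal R) (x : M) :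
    x ∈ gammaIJ I J M ↔ ∃ n : ℕ, 0 < n ∧ I ^ n ≤ Ideal.torsionOf R M x ⊔ J := by
  constructor
  · rintro ⟨n, hn, h⟩; exact ⟨n, hn, (gammaIJ_aux I J x n).mp h⟩
  · rintro ⟨n, hn, h⟩; exact ⟨n, hn, (gammaIJ_aux I J x n).mpr h⟩

lemma sup_mul_sup_le (A J J' : Ideal R) : (A ⊔ J) * (A ⊔ J') ≤ A ⊔ J * J' := by
  refine Ideal.mul_le.2 ?_
  rintro a ha b hb
  obtain ⟨s, hs, j, hj, rfl⟩ := Submodule.mem_sup.1 ha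
  obtain ⟨t, ht, j', hj', rfl⟩ := Submodule.mem_sup.1 hb
  have : (s + j) * (t + j') = (s * t + s * j' + j * t) + j * j' := by ring
  rw [this]
  exact Submodule.mem_sup.2 ⟨_, A.add_mem (A.add_mem (A.mul_mem_right t hs)
    (A.mul_mem_right j' hs)) (A.mul_mem_left j ht), _, Ideal.mul_mem_mul hj hj', rfl⟩

lemma torsionOf_subtype {M : Type} [AddCommGroup M] [Module R M] (S : Submodule R M) (y : S) :
    Ideal.torsionOf R S y = Ideal.torsionOf R M (y : M) := by
  ext a
  simp [Ideal.mem_torsionOf_iff, Subtype.ext_iff]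

end Aux

/-- Proposition 2.4 (v):
`Γ_{I,J}(Γ_{I,J'}(M,N)) = Γ_{I,JJ'}(M,N) = Γ_{I,J ∩ J'}(M,N)`. -/
theorem gammaIJ_gammaIJ_mul (R : Type) [CommRing R] [IsNoetherianRing R]
    (I J J' : Ideal R) (M N : Type) [AddCommGroup M] [Module R M] [Module.Finite R M]
    [AddCommGroup N] [Module R N] :
    (gammaIJ I J ↥(gammaIJ I J' (M →ₗ[R] N))).map (gammaIJ I J' (M →ₗ[R] N)).subtype =
        gammaIJ I (J * J') (M →ₗ[R] N) ∧
      gammaIJ I (J * J') (M →ₗ[R] N) = gammaIJ I (J ⊓ J') (M →ₗ[R] N) := by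
  constructor
  · ext f
    simp only [Submodule.mem_map, Submodule.coe_subtype]
    constructor
    · rintro ⟨y, hy, rfl⟩
      obtain ⟨n, hn, h⟩ := (mem_gammaIJ_iff I J _).mp hy
      obtain ⟨m, hm, h'⟩ := (mem_gammaIJ_iff I J' _).mp y.2
      rw [torsionOf_subtype] at h
      refine (mem_gammaIJ_iff I (J * J') _).mpr ⟨n + m, by omega, ?_⟩
      calc I ^ (n + m) = I ^ n * I ^ m := pow_add I n m
        _ ≤ (Ideal.torsionOf R _ (y : M →ₗ[R] N) ⊔ J) *
            (Ideal.torsionOf R _ (y : M →ₗ[R] N) ⊔ J') := Ideal.mul_mono h h'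
        _ ≤ _ := sup_mul_sup_le _ _ _
    · intro hf
      obtain ⟨n, hn, h⟩ := (mem_gammaIJ_iff I (J * J') _).mp hf
      have hf' : f ∈ gammaIJ I J' (M →ₗ[R] N) :=
        (mem_gammaIJ_iff I J' _).mpr ⟨n, hn, le_trans h (sup_le_sup_left Ideal.mul_le_right _)⟩
      refine ⟨⟨f, hf'⟩, ?_, rfl⟩
      refine (mem_gammaIJ_iff I J _).mpr ⟨n, hn, ?_⟩
      rw [torsionOf_subtype]
      exact le_trans h (sup_le_sup_left Ideal.mul_le_left _)
  · ext f
    rw [mem_gammaIJ_iff, mem_gammaIJ_iff]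
    constructor
    · rintro ⟨n, hn, h⟩
      exact ⟨n, hn, le_trans h (sup_le_sup_left
        (le_inf Ideal.mul_le_left Ideal.mul_le_right) _)⟩
    · rintro ⟨n, hn, h⟩
      refine ⟨n + n, by omega, ?_⟩
      calc I ^ (n + n) = I ^ n * I ^ n := pow_add I n n
        _ ≤ (Ideal.torsionOf R _ f ⊔ (J ⊓ J')) * (Ideal.torsionOf R _ f ⊔ (J ⊓ J')) :=
            Ideal.mul_mono h h
        _ ≤ Ideal.torsionOf R _ f ⊔ (J ⊓ J') * (J ⊓ J') := sup_mul_sup_le _ _ _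
        _ ≤ _ := sup_le_sup_left (Ideal.mul_mono inf_le_left inf_le_right) _
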